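/- The set ℚ × ℚ ⊆ ℝ² is dense in ℝ² and is line-closed; moreover, for any two distinct points p, q ∈ ℚ × ℚ whose connecting line is not parallel to the diagonal line D = {(x, x) : x ∈ ℝ}, the intersection point of the line pq with D lies in ℚ × ℚ; yet the two intersection points of D with the unit circle {p : dist(p,(0,0)) = 1}, namely (√2/2, √2/2) and (−√2/2, −√2/2), do not lie in ℚ × ℚ. (Hence the intersection points of the line y = x with the unit circle cannot be constructed by straightedge from any collection of rational points on the circle and the given line.) -/

import Mathlib

noncomputable section

/-- The Euclidean plane ℝ². -/
abbrev Pt := EuclideanSpace ℝ (Fin 2)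

/-- The point of ℝ² with coordinates (x, y). -/
def pt (x y : ℝ) : Pt := (WithLp.equiv 2 (Fin 2 → ℝ)).symm ![x, y]

/-- The line through two points, as a subset of ℝ². -/
def lineThrough (a b : Pt) : Set Pt := {p : Pt | ∃ t : ℝ, p = a + t • (b - a)}

/-- The direction of the line `cd` is parallel to the direction of the line `ab`. -/
def ParallelDir (a b c d : Pt) : Prop := ∃ k : ℝ, d - c = k • (b - a)

/-- `S` is line-closed: for points `b1 b2 b3 b4 ∈ S` with `b1 ≠ b2`, `b3 ≠ b4`, if the lines
`b1b2` and `b3b4` are distinct and not parallel, then their intersection point lies in `S`. -/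
def LineClosed (S : Set Pt) : Prop :=
  ∀ b1 b2 b3 b4 : Pt, b1 ∈ S → b2 ∈ S → b3 ∈ S → b4 ∈ S → b1 ≠ b2 → b3 ≠ b4 →
    lineThrough b1 b2 ≠ lineThrough b3 b4 → ¬ ParallelDir b1 b2 b3 b4 →
    ∀ p : Pt, p ∈ lineThrough b1 b2 → p ∈ lineThrough b3 b4 → p ∈ S

/-- `S` is closed under intersections with the set `C`: every point of `C` lying on a line
through two distinct points of `S` belongs to `S`. -/
def IntClosed (S C : Set Pt) : Prop :=
  ∀ b1 b2 : Pt, b1 ∈ S → b2 ∈ S → b1 ≠ b2 → ∀ p ∈ C, p ∈ lineThrough b1 b2 → p ∈ S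

/-- `L ⊆ ℝ²` is a line. -/
def IsLine (L : Set Pt) : Prop := ∃ a b : Pt, a ≠ b ∧ L = lineThrough a b

/-- The line `L` is tangent to the circle with center `c` and radius `r`:
the distance from `c` to `L` equals `r`. -/
def TangentTo (L : Set Pt) (c : Pt) (r : ℝ) : Prop := Metric.infDist c L = r


section Helpers

lemma pt0 (x y : ℝ) : pt x y 0 = x := rfl
lemma pt1 (x y : ℝ) : pt x y 1 = y := rfl

lemma dist_pt (x y : ℝ) : dist (pt x y) (pt 0 0) = Real.sqrt (x^2 + y^2) := by
  rw [EuclideanSpace.dist_eq, Fin.sum_univ_two, pt0, pt1, pt0, pt1]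
  norm_num [Real.dist_eq, sq_abs]

lemma pt_eta (p : Pt) : p = pt (p 0) (p 1) := by
  ext i; fin_cases i <;> rfl

lemma mem_rat {p : Pt} (a b : ℚ) (h0 : p 0 = (a : ℝ)) (h1 : p 1 = (b : ℝ)) :
    ∃ a b : ℚ, p = pt a b :=
  ⟨a, b, PiLp.ext fun i => by
    fin_cases i
    · exact h0.trans (pt0 _ _).symm
    · exact h1.trans (pt1 _ _).symm⟩

lemma rat_dense' : Dense {p : Pt | ∃ a b : ℚ, p = pt a b} := by
  rw [Metric.dense_iff]
  intro x r hr
  obtain ⟨a, ha⟩ := exists_rat_near (x 0) (show (0:ℝ) < r/2 by linarith)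
  obtain ⟨b, hb⟩ := exists_rat_near (x 1) (show (0:ℝ) < r/2 by linarith)
  refine ⟨pt a b, ?_, ⟨a, b, rfl⟩⟩
  rw [Metric.mem_ball, EuclideanSpace.dist_eq, Fin.sum_univ_two, pt0, pt1]
  rw [Real.dist_eq, Real.dist_eq, sq_abs, sq_abs, Real.sqrt_lt' hr]
  have h1 : |x 0 - (a:ℝ)| < r/2 := ha
  have h2 : |x 1 - (b:ℝ)| < r/2 := hb
  rw [abs_lt] at h1 h2
  nlinarith [h1.1, h1.2, h2.1, h2.2]

lemma det_ne (b1 b2 b3 b4 : Pt) (hne : b1 ≠ b2)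
    (hpar : ¬ ParallelDir b1 b2 b3 b4) :
    (b2 0 - b1 0) * (b4 1 - b3 1) - (b2 1 - b1 1) * (b4 0 - b3 0) ≠ 0 := by
  intro hdet
  apply hpar
  have hc : b1 0 ≠ b2 0 ∨ b1 1 ≠ b2 1 := by
    by_contra h
    push_neg at h
    exact hne (by ext i; fin_cases i; exacts [h.1, h.2])
  rcases hc with h | h
  · have h' : b2 0 - b1 0 ≠ 0 := sub_ne_zero.mpr (Ne.symm h)
    refine ⟨(b4 0 - b3 0) / (b2 0 - b1 0), ?_⟩
    ext i; fin_cases i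
    · show b4 0 - b3 0 = _ * (b2 0 - b1 0)
      rw [div_mul_cancel₀ _ h']
    · show b4 1 - b3 1 = _ * (b2 1 - b1 1)
      rw [div_mul_eq_mul_div, eq_div_iff h']
      linear_combination hdet
  · have h' : b2 1 - b1 1 ≠ 0 := sub_ne_zero.mpr (Ne.symm h)
    refine ⟨(b4 1 - b3 1) / (b2 1 - b1 1), ?_⟩
    ext i; fin_cases i
    · show b4 0 - b3 0 = _ * (b2 0 - b1 0)
      rw [div_mul_eq_mul_div, eq_div_iff h']
      linear_combination -hdet
    · show b4 1 - b3 1 = _ * (b2 1 - b1 1)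
      rw [div_mul_cancel₀ _ h']

lemma rat_lineClosed' : LineClosed {p : Pt | ∃ a b : ℚ, p = pt a b} := by
  rintro b1 b2 b3 b4 ⟨a1, a2, rfl⟩ ⟨a3, a4, rfl⟩ ⟨a5, a6, rfl⟩ ⟨a7, a8, rfl⟩
    hne _ _ hpar p ⟨t, ht⟩ ⟨s, hs⟩
  have hp0 : p 0 = (a1:ℝ) + t * ((a3:ℝ) - a1) := congrArg (fun v : Pt => v 0) ht
  have hp1 : p 1 = (a2:ℝ) + t * ((a4:ℝ) - a2) := congrArg (fun v : Pt => v 1) ht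
  have hq0 : p 0 = (a5:ℝ) + s * ((a7:ℝ) - a5) := congrArg (fun v : Pt => v 0) hs
  have hq1 : p 1 = (a6:ℝ) + s * ((a8:ℝ) - a6) := congrArg (fun v : Pt => v 1) hs
  have hDr : ((a3:ℝ) - a1) * ((a8:ℝ) - a6) - ((a4:ℝ) - a2) * ((a7:ℝ) - a5) ≠ 0 :=
    det_ne _ _ _ _ hne hpar
  have e1 : (a1:ℝ) + t * ((a3:ℝ) - a1) = (a5:ℝ) + s * ((a7:ℝ) - a5) := hp0.symm.trans hq0
  have e2 : (a2:ℝ) + t * ((a4:ℝ) - a2) = (a6:ℝ) + s * ((a8:ℝ) - a6) := hp1.symm.trans hq1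
  have ht' : t * (((a3:ℝ) - a1) * ((a8:ℝ) - a6) - ((a4:ℝ) - a2) * ((a7:ℝ) - a5)) =
      ((a5:ℝ) - a1) * ((a8:ℝ) - a6) - ((a6:ℝ) - a2) * ((a7:ℝ) - a5) := by
    linear_combination ((a8:ℝ) - a6) * e1 - ((a7:ℝ) - a5) * e2
  have htval : t = (((a5:ℝ) - a1) * ((a8:ℝ) - a6) - ((a6:ℝ) - a2) * ((a7:ℝ) - a5)) /
      (((a3:ℝ) - a1) * ((a8:ℝ) - a6) - ((a4:ℝ) - a2) * ((a7:ℝ) - a5)) :=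
    (eq_div_iff hDr).mpr ht'
  refine mem_rat (a1 + ((a5 - a1) * (a8 - a6) - (a6 - a2) * (a7 - a5)) /
      ((a3 - a1) * (a8 - a6) - (a4 - a2) * (a7 - a5)) * (a3 - a1))
    (a2 + ((a5 - a1) * (a8 - a6) - (a6 - a2) * (a7 - a5)) /
      ((a3 - a1) * (a8 - a6) - (a4 - a2) * (a7 - a5)) * (a4 - a2)) ?_ ?_
  · rw [hp0, htval]; push_cast; ring
  · rw [hp1, htval]; push_cast; ring

lemma rat_diag' : ∀ p q : Pt, p ∈ {p : Pt | ∃ a b : ℚ, p = pt a b} →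
    q ∈ {p : Pt | ∃ a b : ℚ, p = pt a b} → p ≠ q →
    ¬ ParallelDir p q (pt 0 0) (pt 1 1) →
    ∀ z : Pt, z ∈ lineThrough p q → z ∈ {w : Pt | ∃ x : ℝ, w = pt x x} →
      z ∈ {p : Pt | ∃ a b : ℚ, p = pt a b} := by
  rintro p q ⟨a1, a2, rfl⟩ ⟨a3, a4, rfl⟩ hne hpar z ⟨t, ht⟩ ⟨x, rfl⟩
  have hz0 : x = (a1:ℝ) + t * ((a3:ℝ) - a1) := congrArg (fun v : Pt => v 0) ht
  have hz1 : x = (a2:ℝ) + t * ((a4:ℝ) - a2) := congrArg (fun v : Pt => v 1) ht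
  have hd : ((a3:ℝ) - a1) - ((a4:ℝ) - a2) ≠ 0 := by
    intro h
    rcases eq_or_ne ((a3:ℝ) - a1) 0 with h0 | h0
    · apply hne
      have h1 : ((a4:ℝ) - a2) = 0 := by linarith
      ext i; fin_cases i
      · show (a1:ℝ) = (a3:ℝ); linarith
      · show (a2:ℝ) = (a4:ℝ); linarith
    · apply hpar
      refine ⟨1 / ((a3:ℝ) - a1), ?_⟩
      ext i; fin_cases i
      · show (1:ℝ) - 0 = 1 / ((a3:ℝ) - a1) * ((a3:ℝ) - a1)
        field_simp
        norm_num
      · show (1:ℝ) - 0 = 1 / ((a3:ℝ) - a1) * ((a4:ℝ) - a2)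
        rw [sub_zero, one_div, inv_mul_eq_div, eq_div_iff h0]
        linarith
  have htval : t = ((a2:ℝ) - a1) / (((a3:ℝ) - a1) - ((a4:ℝ) - a2)) := by
    rw [eq_div_iff hd]; linarith
  refine mem_rat (a1 + (a2 - a1) / ((a3 - a1) - (a4 - a2)) * (a3 - a1))
    (a1 + (a2 - a1) / ((a3 - a1) - (a4 - a2)) * (a3 - a1)) ?_ ?_
  · show x = _
    rw [hz0, htval]; push_cast; ring
  · show x = _
    rw [hz0, htval]; push_cast; ring

end Helpers

/-- The intersection of the line y = x with the unit circle cannot be constructed from rational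
points: ℚ × ℚ is dense and line-closed, it is closed under intersecting its lines with the
diagonal D = {(x,x)} (when not parallel to it), yet the intersection points ±(√2/2, √2/2) of D
with the unit circle are not in ℚ × ℚ. -/
theorem line_circle_intersection_not_constructible :
    Dense {p : Pt | ∃ a b : ℚ, p = pt a b} ∧
    LineClosed {p : Pt | ∃ a b : ℚ, p = pt a b} ∧
    (∀ p q : Pt, p ∈ {p : Pt | ∃ a b : ℚ, p = pt a b} →
      q ∈ {p : Pt | ∃ a b : ℚ, p = pt a b} → p ≠ q →
      ¬ ParallelDir p q (pt 0 0) (pt 1 1) →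
      ∀ z : Pt, z ∈ lineThrough p q → z ∈ {w : Pt | ∃ x : ℝ, w = pt x x} →
        z ∈ {p : Pt | ∃ a b : ℚ, p = pt a b}) ∧
    pt (Real.sqrt 2 / 2) (Real.sqrt 2 / 2) ∉ {p : Pt | ∃ a b : ℚ, p = pt a b} ∧
    pt (-(Real.sqrt 2 / 2)) (-(Real.sqrt 2 / 2)) ∉ {p : Pt | ∃ a b : ℚ, p = pt a b} ∧
    pt (Real.sqrt 2 / 2) (Real.sqrt 2 / 2) ∈
      {p : Pt | dist p (pt 0 0) = 1} ∩ {w : Pt | ∃ x : ℝ, w = pt x x} ∧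
    pt (-(Real.sqrt 2 / 2)) (-(Real.sqrt 2 / 2)) ∈
      {p : Pt | dist p (pt 0 0) = 1} ∩ {w : Pt | ∃ x : ℝ, w = pt x x} := by
  refine ⟨rat_dense', rat_lineClosed', rat_diag', ?_, ?_, ?_, ?_⟩
  · rintro ⟨a, b, h⟩
    have h0 : Real.sqrt 2 / 2 = (a : ℝ) := congrArg (fun v : Pt => v 0) h
    exact irrational_sqrt_two ⟨2 * a, by push_cast; linarith⟩
  · rintro ⟨a, b, h⟩
    have h0 : -(Real.sqrt 2 / 2) = (a : ℝ) := congrArg (fun v : Pt => v 0) h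
    exact irrational_sqrt_two ⟨-(2 * a), by push_cast; linarith⟩
  · constructor
    · show dist _ _ = 1
      rw [dist_pt]
      have h2 : Real.sqrt 2 ^ 2 = 2 := Real.sq_sqrt (by norm_num)
      have h : (Real.sqrt 2 / 2) ^ 2 + (Real.sqrt 2 / 2) ^ 2 = 1 := by
        rw [div_pow, h2]; norm_num
      rw [h, Real.sqrt_one]
    · exact ⟨_, rfl⟩
  · constructor
    · show dist _ _ = 1
      rw [dist_pt]
      have h2 : Real.sqrt 2 ^ 2 = 2 := Real.sq_sqrt (by norm_num)
      have h : (-(Real.sqrt 2 / 2)) ^ 2 + (-(Real.sqrt 2 / 2)) ^ 2 = 1 := by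
        rw [neg_pow, div_pow, h2]; norm_num
      rw [h, Real.sqrt_one]
    · exact ⟨_, rfl⟩
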